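/- Let p, q > 1 with 1/p + 1/q = 1 and p ≥ 2 (equivalently 1 < q ≤ 2). Then for all x, y in a complex Hilbert space H, ‖x − y‖² + ‖(1−q)•y − x‖² ≤ p·‖x‖² + q·‖y‖². -/

import Mathlib

section Aux

attribute [local instance] InnerProductSpace.complexToReal

theorem bohr_inequality_variant_aux {H : Type*} [NormedAddCommGroup H] [InnerProductSpace ℂ H]
    (p q : ℝ) (hp : 1 < p) (hq : 1 < q) (hpq : 1 / p + 1 / q = 1) (hp2 : 2 ≤ p)
    (x y : H) :
      ‖x - y‖ ^ 2 + ‖(1 - q) • y - x‖ ^ 2 ≤ p * ‖x‖ ^ 2 + q * ‖y‖ ^ 2 := by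
  have hq0 : 0 < q - 1 := by linarith
  have hpq' : p * (q - 1) = q := by
    field_simp at hpq
    nlinarith
  have hq2 : q ≤ 2 := by nlinarith
  set a := ‖x‖ ^ 2 with ha
  set b := ‖y‖ ^ 2 with hb
  set c := (inner ℝ x y : ℝ) with hc
  have e1 : ‖x - y‖ ^ 2 = a - 2 * c + b := by
    rw [norm_sub_sq_real]
  have e2 : ‖(1 - q) • y - x‖ ^ 2 = (1 - q) ^ 2 * b - 2 * ((1 - q) * c) + a := by
    rw [norm_sub_sq_real, norm_smul, real_inner_smul_left, real_inner_comm]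
    simp [mul_pow, abs_sq]
    rfl
  have hs : Real.sqrt (q - 1) ^ 2 = q - 1 := Real.sq_sqrt hq0.le
  have hs0 : Real.sqrt (q - 1) ≠ 0 := by positivity
  have e3 : 0 ≤ (q - 1)⁻¹ * a + (q - 1) * b + 2 * c := by
    have := sq_nonneg ‖(Real.sqrt (q - 1))⁻¹ • x + Real.sqrt (q - 1) • y‖
    rw [norm_add_sq_real, norm_smul, norm_smul, real_inner_smul_left,
      real_inner_smul_right] at this
    rw [Real.norm_eq_abs, Real.norm_eq_abs,
      abs_of_nonneg (by positivity : (0:ℝ) ≤ (Real.sqrt (q-1))⁻¹),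
      abs_of_nonneg (by positivity : (0:ℝ) ≤ Real.sqrt (q-1))] at this
    have heq : ((Real.sqrt (q-1))⁻¹ * ‖x‖) ^ 2 + 2 * ((Real.sqrt (q-1))⁻¹ * (Real.sqrt (q-1) * (inner ℝ x y : ℝ))) + (Real.sqrt (q-1) * ‖y‖) ^ 2
        = (q - 1)⁻¹ * a + (q - 1) * b + 2 * c := by
      rw [ha, hb, hc, mul_pow, mul_pow, inv_pow, hs, inv_mul_cancel_left₀ hs0]
      ring
    rw [heq] at this
    exact this
  rw [e1, e2]
  have hE : 0 ≤ (2 - q) * ((q - 1)⁻¹ * a + (q - 1) * b + 2 * c) :=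
    mul_nonneg (by linarith) e3
  have hinv : (q - 1) * (q - 1)⁻¹ = 1 := mul_inv_cancel₀ (by linarith)
  nlinarith [hE, hpq', hinv, mul_nonneg (mul_nonneg (by linarith : (0:ℝ) ≤ 2 - q) hq0.le) (sq_nonneg ‖x‖)]

end Aux

theorem bohr_inequality_variant {H : Type*} [NormedAddCommGroup H] [InnerProductSpace ℂ H]
    (p q : ℝ) (hp : 1 < p) (hq : 1 < q) (hpq : 1 / p + 1 / q = 1) (hp2 : 2 ≤ p) :
    ∀ x y : H,
      ‖x - y‖ ^ 2 + ‖(1 - q) • y - x‖ ^ 2 ≤ p * ‖x‖ ^ 2 + q * ‖y‖ ^ 2 := fun x y =>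
  bohr_inequality_variant_aux p q hp hq hpq hp2 x y
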